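/- The function h(t) = (90t + 52t·cosh(2t) - 66·sinh(2t) + 2t·cosh(4t) - 3·sinh(4t)) / (15t - 20t·cosh(2t) + 5t·cosh(4t)) is strictly decreasing on (0, log(1+√2)). -/

import Mathlib

open Real

/-- Taylor-type bounds for sinh and cosh on [0,1]. -/
lemma taylor_bounds (t : ℝ) (h0 : 0 ≤ t) (h1 : t ≤ 1) :
    (t + t^3/6 + t^5/120 ≤ Real.sinh t ∧
     Real.sinh t ≤ t + t^3/6 + t^5/120 + t^7/4960) ∧
    (1 + t^2/2 + t^4/24 + t^6/720 ≤ Real.cosh t ∧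
     Real.cosh t ≤ 1 + t^2/2 + t^4/24 + t^6/720 + t^8/39000) := by
  have habs : |t| ≤ 1 := by rwa [abs_of_nonneg h0]
  have habs' : |(-t)| ≤ 1 := by rwa [abs_neg]
  have hb1 := Real.exp_bound habs (n := 10) (by norm_num)
  have hb2 := Real.exp_bound habs' (n := 10) (by norm_num)
  rw [abs_of_nonneg h0] at hb1
  rw [abs_neg, abs_of_nonneg h0] at hb2
  simp only [Finset.sum_range_succ, Finset.sum_range_zero] at hb1 hb2
  norm_num [Nat.factorial] at hb1 hb2
  rw [abs_le] at hb1 hb2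
  obtain ⟨hb1l, hb1r⟩ := hb1
  obtain ⟨hb2l, hb2r⟩ := hb2
  ring_nf at hb1l hb1r hb2l hb2r
  have hsinh := Real.sinh_eq t
  have hcosh := Real.cosh_eq t
  have h7 : 0 ≤ t^7 := by positivity
  have h8 : 0 ≤ t^8 := by positivity
  have h97 : t^9 ≤ t^7 := pow_le_pow_of_le_one h0 h1 (by norm_num)
  have h107 : t^10 ≤ t^7 := pow_le_pow_of_le_one h0 h1 (by norm_num)
  have h108 : t^10 ≤ t^8 := pow_le_pow_of_le_one h0 h1 (by norm_num)
  have h90 : 0 ≤ t^9 := by positivity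
  have h100 : 0 ≤ t^10 := by positivity
  refine ⟨⟨by nlinarith, by nlinarith⟩, ⟨by nlinarith, by nlinarith⟩⟩

set_option maxHeartbeats 2000000 in
/-- The key inequality: E(t,s,c) < 0 given the Taylor bounds. -/
lemma E_neg (t s c : ℝ) (ht0 : 0 < t) (ht1 : t < 1)
    (hs0 : 0 ≤ s) (hc0 : 0 ≤ c)
    (hsl : t + t^3/6 + t^5/120 ≤ s)
    (hsu : s ≤ t + t^3/6 + t^5/120 + t^7/4960)
    (hcl : 1 + t^2/2 + t^4/24 + t^6/720 ≤ c)
    (hcu : c ≤ 1 + t^2/2 + t^4/24 + t^6/720 + t^8/39000) :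
    18*t*s + 13*t*s^3 + 6*s^2*c + s^4*c - 24*t^2*c - 10*t^2*s^2*c < 0 := by
  set sU : ℝ := t + t^3/6 + t^5/120 + t^7/4960 with hsUdef
  set sL : ℝ := t + t^3/6 + t^5/120 with hsLdef
  set cU : ℝ := 1 + t^2/2 + t^4/24 + t^6/720 + t^8/39000 with hcUdef
  set cL : ℝ := 1 + t^2/2 + t^4/24 + t^6/720 with hcLdef
  have hsL0 : (0:ℝ) ≤ sL := by positivity
  have hcL0 : (0:ℝ) ≤ cL := by positivity
  have b1 : s^3 ≤ sU^3 := pow_le_pow_left₀ hs0 hsu 3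
  have b2 : s^2 ≤ sU^2 := pow_le_pow_left₀ hs0 hsu 2
  have b2' : sL^2 ≤ s^2 := pow_le_pow_left₀ hsL0 hsl 2
  have b4 : s^4 ≤ sU^4 := pow_le_pow_left₀ hs0 hsu 4
  have hsU2 : (0:ℝ) ≤ sU^2 := by positivity
  have hsU4 : (0:ℝ) ≤ sU^4 := by positivity
  have b3 : s^2*c ≤ sU^2*cU := mul_le_mul b2 hcu hc0 hsU2
  have b5 : s^4*c ≤ sU^4*cU := mul_le_mul b4 hcu hc0 hsU4
  have b6 : sL^2*cL ≤ s^2*c := mul_le_mul b2' hcl hcL0 (by positivity)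
  have b7 : 18*t*s ≤ 18*t*sU := by nlinarith
  have b8 : 13*t*s^3 ≤ 13*t*sU^3 := by nlinarith
  have b9 : 24*t^2*cL ≤ 24*t^2*c := by nlinarith
  have b10 : 10*t^2*(sL^2*cL) ≤ 10*t^2*(s^2*c) := by nlinarith
  have hQ : 18*t*sU + 13*t*sU^3 + 6*(sU^2*cU) + sU^4*cU - 24*t^2*cL - 10*t^2*(sL^2*cL) < 0 := by
    have hexp : 18*t*sU + 13*t*sU^3 + 6*(sU^2*cU) + sU^4*cU - 24*t^2*cL - 10*t^2*(sL^2*cL) =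
      (-7367/22320 : ℝ) * t^8 +
      (-801547/21762000 : ℝ) * t^10 +
      (20897/2106000 : ℝ) * t^12 +
      (336394243/107939520000 : ℝ) * t^14 +
      (27075683/64763712000 : ℝ) * t^16 +
      (4224907861/116574681600000 : ℝ) * t^18 +
      (5409907/2331493632000 : ℝ) * t^20 +
      (225166571/1927368069120000 : ℝ) * t^22 +
      (341183539/72276302592000000 : ℝ) * t^24 +
      (843971/5559715584000000 : ℝ) * t^26 +
      (101593303/26554848952320000000 : ℝ) * t^28 +
      (11710249/159329093713920000000 : ℝ) * t^30 +
      (217241/212438791618560000000 : ℝ) * t^32 +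
      (439/47208620359680000000 : ℝ) * t^34 +
      (1/23604310179840000000 : ℝ) * t^36 := by
      rw [hsUdef, hsLdef, hcUdef, hcLdef]; ring
    rw [hexp]
    have hp8 : 0 < t^8 := by positivity
    have h10 : 0 ≤ t^10 := by positivity
    have e12 : t^12 ≤ t^8 := pow_le_pow_of_le_one ht0.le ht1.le (by norm_num)
    have e14 : t^14 ≤ t^8 := pow_le_pow_of_le_one ht0.le ht1.le (by norm_num)
    have e16 : t^16 ≤ t^8 := pow_le_pow_of_le_one ht0.le ht1.le (by norm_num)
    have e18 : t^18 ≤ t^8 := pow_le_pow_of_le_one ht0.le ht1.le (by norm_num)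
    have e20 : t^20 ≤ t^8 := pow_le_pow_of_le_one ht0.le ht1.le (by norm_num)
    have e22 : t^22 ≤ t^8 := pow_le_pow_of_le_one ht0.le ht1.le (by norm_num)
    have e24 : t^24 ≤ t^8 := pow_le_pow_of_le_one ht0.le ht1.le (by norm_num)
    have e26 : t^26 ≤ t^8 := pow_le_pow_of_le_one ht0.le ht1.le (by norm_num)
    have e28 : t^28 ≤ t^8 := pow_le_pow_of_le_one ht0.le ht1.le (by norm_num)
    have e30 : t^30 ≤ t^8 := pow_le_pow_of_le_one ht0.le ht1.le (by norm_num)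
    have e32 : t^32 ≤ t^8 := pow_le_pow_of_le_one ht0.le ht1.le (by norm_num)
    have e34 : t^34 ≤ t^8 := pow_le_pow_of_le_one ht0.le ht1.le (by norm_num)
    have e36 : t^36 ≤ t^8 := pow_le_pow_of_le_one ht0.le ht1.le (by norm_num)
    linarith
  linarith

theorem stmt_7 :
    StrictAntiOn (fun t : ℝ =>
      (90 * t + 52 * t * Real.cosh (2 * t) - 66 * Real.sinh (2 * t) +
        2 * t * Real.cosh (4 * t) - 3 * Real.sinh (4 * t)) /
      (15 * t - 20 * t * Real.cosh (2 * t) + 5 * t * Real.cosh (4 * t)))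
      (Set.Ioo 0 (Real.log (1 + Real.sqrt 2))) := by
  -- log (1 + √2) < 1
  have hsqrt2 : Real.sqrt 2 < 1.5 := by
    nlinarith [Real.sq_sqrt (by norm_num : (0:ℝ) ≤ 2), Real.sqrt_nonneg 2]
  have hlog1 : Real.log (1 + Real.sqrt 2) < 1 := by
    exact (Real.log_lt_iff_lt_exp (by positivity)).mpr (by nlinarith [Real.exp_one_gt_d9])
  -- positivity of the denominator on the interval
  have hDid : ∀ x : ℝ, 15*x - 20*x*Real.cosh (2*x) + 5*x*Real.cosh (4*x)
      = 40*x*Real.sinh x^4 := by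
    intro x
    have e2c : Real.cosh (2*x) = 2*Real.cosh x^2 - 1 := by
      linear_combination (Real.cosh_two_mul x) - (Real.cosh_sq x)
    have e4c : Real.cosh (4*x) = 2*(2*Real.cosh x^2 - 1)^2 - 1 := by
      rw [show (4:ℝ)*x = 2*(2*x) by ring,
        (by linear_combination (Real.cosh_two_mul (2*x)) - (Real.cosh_sq (2*x)) :
          Real.cosh (2*(2*x)) = 2*Real.cosh (2*x)^2 - 1), e2c]
    rw [e2c, e4c]
    linear_combination (40*x*(Real.cosh x^2 + Real.sinh x^2 - 1)) *
      Real.cosh_sq_sub_sinh_sq x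
  have hDpos : ∀ x ∈ Set.Ioo (0:ℝ) (Real.log (1 + Real.sqrt 2)),
      0 < 15*x - 20*x*Real.cosh (2*x) + 5*x*Real.cosh (4*x) := by
    intro x hx
    rw [hDid x]
    have hs : 0 < Real.sinh x := by rw [Real.sinh_pos_iff]; exact hx.1
    have : 0 < 40 * x := by linarith [hx.1]
    exact mul_pos this (pow_pos hs 4)
  apply strictAntiOn_of_deriv_neg (convex_Ioo _ _)
  · apply ContinuousOn.div
    · fun_prop
    · fun_prop
    · intro x hx
      exact ne_of_gt (hDpos x hx)
  · intro x hx
    rw [interior_Ioo] at hx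
    obtain ⟨hx0, hxu⟩ := hx
    have hx1 : x < 1 := lt_trans hxu hlog1
    -- derivatives
    have hid : HasDerivAt (fun t : ℝ => t) 1 x := hasDerivAt_id x
    have h2x : HasDerivAt (fun t : ℝ => 2*t) 2 x := by
      simpa using hid.const_mul (2:ℝ)
    have h4x : HasDerivAt (fun t : ℝ => 4*t) 4 x := by
      simpa using hid.const_mul (4:ℝ)
    have hc2 : HasDerivAt (fun t : ℝ => Real.cosh (2*t)) (Real.sinh (2*x) * 2) x :=
      (Real.hasDerivAt_cosh (2*x)).comp x h2x
    have hs2 : HasDerivAt (fun t : ℝ => Real.sinh (2*t)) (Real.cosh (2*x) * 2) x :=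
      (Real.hasDerivAt_sinh (2*x)).comp x h2x
    have hc4 : HasDerivAt (fun t : ℝ => Real.cosh (4*t)) (Real.sinh (4*x) * 4) x :=
      (Real.hasDerivAt_cosh (4*x)).comp x h4x
    have hs4 : HasDerivAt (fun t : ℝ => Real.sinh (4*t)) (Real.cosh (4*x) * 4) x :=
      (Real.hasDerivAt_sinh (4*x)).comp x h4x
    have h90 : HasDerivAt (fun t : ℝ => 90*t) 90 x := by
      simpa using hid.const_mul (90:ℝ)
    have h52 : HasDerivAt (fun t : ℝ => 52*t) 52 x := by
      simpa using hid.const_mul (52:ℝ)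
    have h2c : HasDerivAt (fun t : ℝ => 2*t) 2 x := h2x
    have hN : HasDerivAt (fun t : ℝ => 90 * t + 52 * t * Real.cosh (2 * t) -
        66 * Real.sinh (2 * t) + 2 * t * Real.cosh (4 * t) - 3 * Real.sinh (4 * t))
        (90 + (52 * Real.cosh (2*x) + 52*x*(Real.sinh (2*x) * 2)) -
          66 * (Real.cosh (2*x) * 2) + (2 * Real.cosh (4*x) + 2*x*(Real.sinh (4*x) * 4)) -
          3 * (Real.cosh (4*x) * 4)) x := by
      have hA : HasDerivAt (fun t : ℝ => 52 * t * Real.cosh (2 * t))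
          (52 * Real.cosh (2*x) + 52*x*(Real.sinh (2*x) * 2)) x := by
        simpa using h52.fun_mul hc2
      have hB : HasDerivAt (fun t : ℝ => 2 * t * Real.cosh (4 * t))
          (2 * Real.cosh (4*x) + 2*x*(Real.sinh (4*x) * 4)) x := by
        simpa using h2c.fun_mul hc4
      exact ((((h90.add hA).sub (hs2.const_mul 66)).add hB).sub (hs4.const_mul 3))
    have hD : HasDerivAt (fun t : ℝ => 15 * t - 20 * t * Real.cosh (2 * t) +
        5 * t * Real.cosh (4 * t))
        (15 - (20 * Real.cosh (2*x) + 20*x*(Real.sinh (2*x) * 2)) +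
          (5 * Real.cosh (4*x) + 5*x*(Real.sinh (4*x) * 4))) x := by
      have h15 : HasDerivAt (fun t : ℝ => 15*t) 15 x := by
        simpa using hid.const_mul (15:ℝ)
      have h20 : HasDerivAt (fun t : ℝ => 20*t) 20 x := by
        simpa using hid.const_mul (20:ℝ)
      have h5 : HasDerivAt (fun t : ℝ => 5*t) 5 x := by
        simpa using hid.const_mul (5:ℝ)
      have hA : HasDerivAt (fun t : ℝ => 20 * t * Real.cosh (2 * t))
          (20 * Real.cosh (2*x) + 20*x*(Real.sinh (2*x) * 2)) x := by
        simpa using h20.fun_mul hc2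
      have hB : HasDerivAt (fun t : ℝ => 5 * t * Real.cosh (4 * t))
          (5 * Real.cosh (4*x) + 5*x*(Real.sinh (4*x) * 4)) x := by
        simpa using h5.fun_mul hc4
      exact (h15.sub hA).add hB
    have hDne : (15*x - 20*x*Real.cosh (2*x) + 5*x*Real.cosh (4*x)) ≠ 0 :=
      ne_of_gt (hDpos x ⟨hx0, hxu⟩)
    have hf := hN.fun_div hD hDne
    rw [hf.deriv]
    apply div_neg_of_neg_of_pos
    · -- numerator negative
      set s := Real.sinh x with hs_def
      set c := Real.cosh x with hc_def
      have e2c : Real.cosh (2*x) = 2*c^2 - 1 := by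
        rw [hc_def]
        linear_combination (Real.cosh_two_mul x) - (Real.cosh_sq x)
      have e2s : Real.sinh (2*x) = 2*s*c := Real.sinh_two_mul x
      have e4c : Real.cosh (4*x) = 2*(2*c^2 - 1)^2 - 1 := by
        rw [show (4:ℝ)*x = 2*(2*x) by ring,
          (by linear_combination (Real.cosh_two_mul (2*x)) - (Real.cosh_sq (2*x)) :
            Real.cosh (2*(2*x)) = 2*Real.cosh (2*x)^2 - 1), e2c]
      have e4s : Real.sinh (4*x) = 4*s*c*(2*c^2 - 1) := by
        rw [show (4:ℝ)*x = 2*(2*x) by ring, Real.sinh_two_mul, e2s, e2c]; ring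
      have hsq := Real.cosh_sq_sub_sinh_sq x
      rw [← hs_def, ← hc_def] at hsq
      have hspos : 0 < s := by rw [hs_def, Real.sinh_pos_iff]; exact hx0
      have hcpos : 0 < c := by rw [hc_def]; exact Real.cosh_pos x
      -- Taylor bounds on sinh and cosh at x
      obtain ⟨⟨hsl, hsu⟩, ⟨hcl, hcu⟩⟩ := taylor_bounds x hx0.le hx1.le
      rw [← hs_def] at hsl hsu
      rw [← hc_def] at hcl hcu
      have hE := E_neg x s c hx0 hx1 hspos.le hcpos.le hsl hsu hcl hcu
      have hkey : (90 + (52 * Real.cosh (2*x) + 52*x*(Real.sinh (2*x) * 2)) -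
          66 * (Real.cosh (2*x) * 2) + (2 * Real.cosh (4*x) + 2*x*(Real.sinh (4*x) * 4)) -
          3 * (Real.cosh (4*x) * 4)) * (15*x - 20*x*Real.cosh (2*x) + 5*x*Real.cosh (4*x)) -
          (90 * x + 52 * x * Real.cosh (2 * x) - 66 * Real.sinh (2 * x) +
            2 * x * Real.cosh (4 * x) - 3 * Real.sinh (4 * x)) *
          (15 - (20 * Real.cosh (2*x) + 20*x*(Real.sinh (2*x) * 2)) +
            (5 * Real.cosh (4*x) + 5*x*(Real.sinh (4*x) * 4))) =
          960 * s^3 * (18*x*s + 13*x*s^3 + 6*s^2*c + s^4*c - 24*x^2*c - 10*x^2*s^2*c) := by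
        rw [e2c, e2s, e4c, e4s]
        linear_combination ((-4800)*s*c + 3840*s*c^3 + 960*s*c^5 + 4800*s^3*c +
          960*s^3*c^3 + 960*s^5*c - 4800*x + 11520*x*c^2 - 2880*x*c^4 - 3840*x*c^6 +
          4800*x*s^2 + 12480*x*s^2*c^2 + 12480*x*s^4 - 13440*x^2*s*c -
          9600*x^2*s*c^3 - 9600*x^2*s^3*c) * hsq
      rw [hkey]
      exact mul_neg_of_pos_of_neg (by positivity) hE
    · -- denominator positive
      exact pow_pos (hDpos x ⟨hx0, hxu⟩) 2
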